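/- Let n ≥ 2 and 1 ≤ k ≤ n−1. Let κ ∈ ℝ^n have all entries positive with κ₁ ≤ κ_j for every j. Then for every index α ≠ 1: σ_{k−1}(κ|α1) ≥ ((n−k)/(n−1))·σ_{k−1}(κ|α). -/

import Mathlib

open scoped Classical

noncomputable section

/-- The `j`-th elementary symmetric function of the family `κ` restricted to the
finite index set `s`; it is `1` for `j = 0`, and `0` for `j < 0` (or for `j`
larger than the cardinality of `s`). -/
def sigmaE {ι : Type*} (s : Finset ι) (j : ℤ) (κ : ι → ℝ) : ℝ :=
  if 0 ≤ j then ∑ t ∈ s.powersetCard j.toNat, ∏ i ∈ t, κ i else 0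

/-- `σ_j(κ)`, the `j`-th elementary symmetric polynomial evaluated at `κ`. -/
def sigmaV {ι : Type*} [Fintype ι] (j : ℤ) (κ : ι → ℝ) : ℝ :=
  sigmaE Finset.univ j κ

/-- `σ_j(κ|α)`: `σ_j` of `κ` with the `α`-th entry deleted. -/
def sigmaV1 {ι : Type*} [Fintype ι] [DecidableEq ι] (j : ℤ) (κ : ι → ℝ) (α : ι) : ℝ :=
  sigmaE (Finset.univ.erase α) j κ

/-- `σ_j(κ|αβ)`: `σ_j` of `κ` with the `α`-th and `β`-th entries deleted. -/
def sigmaV2 {ι : Type*} [Fintype ι] [DecidableEq ι] (j : ℤ) (κ : ι → ℝ) (α β : ι) : ℝ :=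
  sigmaE ((Finset.univ.erase α).erase β) j κ

/-- `σ_j(A)` for a real `n × n` matrix `A`: the `j`-th elementary symmetric function of
the eigenvalues of `A` when `A` is symmetric (= Hermitian over `ℝ`), junk value `0`
otherwise. -/
def sigmaMat {n : ℕ} (j : ℤ) (A : Matrix (Fin n) (Fin n) ℝ) : ℝ :=
  if h : A.IsHermitian then sigmaV j h.eigenvalues else 0

/-- The Hessian quotient operator `F(A) = σ_n(A)/σ_{n-k}(A)`. -/
def Fquot {n : ℕ} (k : ℕ) (A : Matrix (Fin n) (Fin n) ℝ) : ℝ :=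
  sigmaMat (n : ℤ) A / sigmaMat ((n : ℤ) - (k : ℤ)) A

open Finset

lemma aux_insert {ι : Type*} [DecidableEq ι] (s : Finset ι) (a : ι) (ha : a ∉ s)
    (j : ℕ) (κ : ι → ℝ) :
    ∑ t ∈ (insert a s).powersetCard (j+1), ∏ i ∈ t, κ i
      = ∑ t ∈ s.powersetCard (j+1), ∏ i ∈ t, κ i
        + κ a * ∑ t ∈ s.powersetCard j, ∏ i ∈ t, κ i := by
  have hdisj : Disjoint (s.powersetCard (j+1)) ((s.powersetCard j).image (insert a)) := by
    rw [disjoint_right]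
    intro t ht2 ht
    obtain ⟨u, hu, rfl⟩ := mem_image.1 ht2
    exact ha ((mem_powersetCard.1 ht).1 (mem_insert_self a u))
  have hinj : ∀ x ∈ s.powersetCard j, ∀ y ∈ s.powersetCard j,
      insert a x = insert a y → x = y := by
    intro x hx y hy hxy
    have hax : a ∉ x := fun h => ha ((mem_powersetCard.1 hx).1 h)
    have hay : a ∉ y := fun h => ha ((mem_powersetCard.1 hy).1 h)
    rw [← erase_insert hax, ← erase_insert hay, hxy]
  rw [powersetCard_succ_insert ha, sum_union hdisj, sum_image hinj, mul_sum]
  congr 1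
  refine sum_congr rfl fun t ht => ?_
  rw [prod_insert (fun hat => ha ((mem_powersetCard.1 ht).1 hat))]

lemma aux_double {ι : Type*} [DecidableEq ι] (s : Finset ι) (j : ℕ) (κ : ι → ℝ) :
    ((j:ℝ)+1) * ∑ t ∈ s.powersetCard (j+1), ∏ i ∈ t, κ i
      = ∑ u ∈ s.powersetCard j, ∑ a ∈ s \ u, κ a * ∏ i ∈ u, κ i := by
  have h1 : ∀ t ∈ s.powersetCard (j+1),
      ((j:ℝ)+1) * ∏ i ∈ t, κ i = ∑ a ∈ t, κ a * ∏ i ∈ t.erase a, κ i := by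
    intro t ht
    obtain ⟨hts, htc⟩ := mem_powersetCard.1 ht
    have : ∀ a ∈ t, κ a * ∏ i ∈ t.erase a, κ i = ∏ i ∈ t, κ i := by
      intro a hat; rw [← prod_insert (notMem_erase a t), insert_erase hat]
    rw [sum_congr rfl this, sum_const, htc, nsmul_eq_mul]
    push_cast; ring
  rw [mul_sum, sum_congr rfl h1, sum_sigma', sum_sigma']
  refine sum_nbij' (fun p => ⟨p.1.erase p.2, p.2⟩) (fun p => ⟨insert p.2 p.1, p.2⟩)
    ?_ ?_ ?_ ?_ ?_
  · rintro ⟨t, a⟩ h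
    simp only [mem_sigma, mem_powersetCard] at h ⊢
    obtain ⟨⟨hts, htc⟩, hat⟩ := h
    refine ⟨⟨(erase_subset a t).trans hts, ?_⟩, mem_sdiff.2 ⟨hts hat, notMem_erase a t⟩⟩
    rw [card_erase_of_mem hat, htc]; rfl
  · rintro ⟨u, a⟩ h
    simp only [mem_sigma, mem_powersetCard, mem_sdiff] at h ⊢
    obtain ⟨⟨hus, huc⟩, has, hau⟩ := h
    exact ⟨⟨insert_subset has hus, by rw [card_insert_of_notMem hau, huc]⟩,
      mem_insert_self a u⟩
  · rintro ⟨t, a⟩ h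
    simp only [mem_sigma, mem_powersetCard] at h
    simp [insert_erase h.2]
  · rintro ⟨u, a⟩ h
    simp only [mem_sigma, mem_powersetCard, mem_sdiff] at h
    simp [erase_insert h.2.2]
  · rintro ⟨t, a⟩ h; rfl

lemma sigmaE_ofNat {ι : Type*} (s : Finset ι) (j : ℕ) (κ : ι → ℝ) :
    sigmaE s (j : ℤ) κ = ∑ t ∈ s.powersetCard j, ∏ i ∈ t, κ i := by
  simp [sigmaE]

open Finset in
/-- inequality (2.27): for positive `κ ∈ ℝⁿ` with `κ₁ ≤ κ_j` for all
`j`, and any index `α ≠ 1`: `σ_{k-1}(κ|α1) ≥ ((n-k)/(n-1)) σ_{k-1}(κ|α)`. -/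
theorem stmt_10 (n k : ℕ) (hn : 2 ≤ n) (hk1 : 1 ≤ k) (hk2 : k ≤ n - 1)
    (κ : Fin n → ℝ) (hpos : ∀ i, 0 < κ i) :
    let i0 : Fin n := ⟨0, by omega⟩
    (∀ j, κ i0 ≤ κ j) →
    ∀ α : Fin n, α ≠ i0 →
      sigmaV2 ((k : ℤ) - 1) κ α i0
        ≥ (((n : ℝ) - (k : ℝ)) / ((n : ℝ) - 1)) * sigmaV1 ((k : ℤ) - 1) κ α := by
  intro i0 hmin α hα
  have hn1 : (0:ℝ) < (n:ℝ) - 1 := by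
    have : (2:ℝ) ≤ (n:ℝ) := by exact_mod_cast hn
    linarith
  set s2 : Finset (Fin n) := (Finset.univ.erase α).erase i0 with hs2
  set s1 : Finset (Fin n) := Finset.univ.erase α with hs1
  have hi0s2 : i0 ∉ s2 := notMem_erase _ _
  have hins : insert i0 s2 = s1 := by
    rw [hs2, insert_erase]
    exact mem_erase.2 ⟨fun h => hα h.symm, mem_univ _⟩
  have hmemi0 : i0 ∈ s1 := mem_erase.2 ⟨fun h => hα h.symm, mem_univ _⟩
  have hcard2 : s2.card = n - 2 := by
    have : s2.card = n - 1 - 1 := by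
      rw [hs2, card_erase_of_mem hmemi0, hs1, card_erase_of_mem (mem_univ α), card_univ,
        Fintype.card_fin]
    omega
  rw [ge_iff_le, div_mul_eq_mul_div, div_le_iff₀ hn1]
  have hk1' : ((k:ℤ) - 1) = ((k - 1 : ℕ) : ℤ) := by omega
  rw [hk1']
  unfold sigmaV1 sigmaV2
  rw [← hs1, ← hs2, sigmaE_ofNat, sigmaE_ofNat]
  rcases Nat.lt_or_ge k 2 with hklt | hkge
  · -- k = 1
    have hk : k = 1 := by omega
    subst hk
    simp only [Nat.sub_self, powersetCard_zero]
    simp only [sum_singleton, prod_empty]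
    push_cast
    linarith
  · -- k ≥ 2
    obtain ⟨j, rfl⟩ : ∃ j, k = j + 2 := ⟨k - 2, by omega⟩
    have hcj : j + 2 + 1 ≤ n := by omega
    have hkm : j + 2 - 1 = j + 1 := rfl
    rw [hkm, ← hins, aux_insert s2 i0 hi0s2 j κ]
    -- Notation
    set A : ℝ := ∑ t ∈ s2.powersetCard (j+1), ∏ i ∈ t, κ i with hA
    set B : ℝ := ∑ t ∈ s2.powersetCard j, ∏ i ∈ t, κ i with hB
    have key : ((n:ℝ) - (j + 2)) * (κ i0 * B) ≤ ((j:ℝ)+1) * A := by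
      rw [aux_double s2 j κ]
      have step : ∀ u ∈ s2.powersetCard j,
          ((n:ℝ) - (j+2)) * (κ i0 * ∏ i ∈ u, κ i) ≤ ∑ a ∈ s2 \ u, κ a * ∏ i ∈ u, κ i := by
        intro u hu
        obtain ⟨hus, huc⟩ := mem_powersetCard.1 hu
        have hprod : (0:ℝ) ≤ ∏ i ∈ u, κ i := prod_nonneg fun i _ => (hpos i).le
        have hcardsd : (s2 \ u).card = n - 2 - j := by
          rw [card_sdiff_of_subset hus, hcard2, huc]
        have h1 : ∑ a ∈ s2 \ u, κ i0 * ∏ i ∈ u, κ i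
            ≤ ∑ a ∈ s2 \ u, κ a * ∏ i ∈ u, κ i :=
          sum_le_sum fun a _ => mul_le_mul_of_nonneg_right (hmin a) hprod
        rw [sum_const, hcardsd, nsmul_eq_mul] at h1
        have hcast : ((n - 2 - j : ℕ) : ℝ) = (n:ℝ) - (j + 2) := by
          rw [Nat.cast_sub (by omega), Nat.cast_sub (by omega)]
          push_cast; ring
        rwa [hcast] at h1
      calc ((n:ℝ) - (j + 2)) * (κ i0 * B)
          = ∑ u ∈ s2.powersetCard j, ((n:ℝ) - (j+2)) * (κ i0 * ∏ i ∈ u, κ i) := by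
            rw [hB, mul_sum, mul_sum]
        _ ≤ _ := sum_le_sum step
    have hBnn : (0:ℝ) ≤ B := sum_nonneg fun t _ => prod_nonneg fun i _ => (hpos i).le
    have hAnn : (0:ℝ) ≤ A := sum_nonneg fun t _ => prod_nonneg fun i _ => (hpos i).le
    have hki : (0:ℝ) ≤ κ i0 := (hpos i0).le
    have hnk : (0:ℝ) ≤ (n:ℝ) - (j+2) := by
      have : (j:ℝ) + 2 + 1 ≤ (n:ℝ) := by exact_mod_cast hcj
      linarith
    push_cast
    nlinarith [key]
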